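/- Let O and Ô be direction-consistent orientations and write Δ = Δ_{O,Ô}. Let σ : ℂ → ℂ be odd (σ(−x) = −σ(x) for all x), applied entrywise to matrices; let h₁ : ℂ^{V×d_e} → ℂ^{V×k₁} and h₂ : ℂ^{V×d_i} → ℂ^{V×k₂} be arbitrary functions, and W₁ ∈ ℂ^{k₁×d'}, W₂ ∈ ℂ^{k₂×d'}, W₃ ∈ ℂ^{d_e×d'}. For X ∈ ℂ^{E×d_e} and Y ∈ ℂ^{E×d_i} define Z(X, Y, O) = σ( (B_equ(O))ᴴ · h₁(B_equ(O) · X) · W₁ + (B_equ(O))ᴴ · h₂(B_inv · Y) · W₂ + X · W₃ ). Then Z(Δ · X, Y, Ô) = Δ · Z(X, Y, O); that is, the equivariant EIGN convolution layer is jointly orientation-equivariant. -/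
import Mathlib


open Matrix

/-- `O` assigns to each edge either its endpoint pair `(s e, t e)` or the reversed pair. -/
def IsOrientation {V E : Type*} (s t : E → V) (O : E → V × V) : Prop :=
  ∀ e, O e = (s e, t e) ∨ O e = (t e, s e)

/-- A direction-consistent orientation: an orientation which agrees with the direction
`(s e, t e)` on every directed edge. -/
def DirConsistent {V E : Type*} (s t : E → V) (dir : E → Bool) (O : E → V × V) : Prop :=
  IsOrientation s t O ∧ ∀ e, dir e = true → O e = (s e, t e)

/-- The magnetic equivariant boundary operator. -/
noncomputable def Bequ {V E : Type*} [DecidableEq V] (q : ℝ) (s t : E → V) (dir : E → Bool)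
    (O : E → V × V) : Matrix V E ℂ :=
  Matrix.of fun v e =>
    if dir e then
      if v = s e then -Complex.exp (Complex.I * (Real.pi * q : ℂ))
      else if v = t e then Complex.exp (-(Complex.I * (Real.pi * q : ℂ)))
      else 0
    else
      if v = (O e).1 then -1
      else if v = (O e).2 then 1
      else 0

/-- The magnetic invariant boundary operator. -/
noncomputable def Binv {V E : Type*} [DecidableEq V] (q : ℝ) (s t : E → V) (dir : E → Bool) :
    Matrix V E ℂ :=
  Matrix.of fun v e =>
    if dir e then
      if v = s e then Complex.exp (Complex.I * (Real.pi * q : ℂ))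
      else if v = t e then Complex.exp (-(Complex.I * (Real.pi * q : ℂ)))
      else 0
    else
      if v = s e ∨ v = t e then 1 else 0

/-- The orientation-change matrix `Δ_{O,Ô}`. -/
noncomputable def Delta {V E : Type*} [DecidableEq V] [DecidableEq E] (O Ohat : E → V × V) :
    Matrix E E ℂ :=
  Matrix.diagonal fun e => if O e = Ohat e then 1 else -1

/-- The equivariant EIGN convolution layer
`Z(X, Y, O) = σ((B_equ(O))ᴴ h₁(B_equ(O) X) W₁ + (B_equ(O))ᴴ h₂(B_inv Y) W₂ + X W₃)`
is jointly orientation-equivariant: `Z(Δ·X, Y, Ô) = Δ · Z(X, Y, O)`. -/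
theorem eign_equivariant_convolution_layer
    {V E de di k₁ k₂ d' : Type*} [Fintype V] [Fintype E] [DecidableEq V] [DecidableEq E]
    [Fintype de] [Fintype di] [Fintype k₁] [Fintype k₂]
    (q : ℝ) (s t : E → V) (hst : ∀ e, s e ≠ t e) (dir : E → Bool)
    (O Ohat : E → V × V)
    (hO : DirConsistent s t dir O) (hOhat : DirConsistent s t dir Ohat)
    (σ : ℂ → ℂ) (hσ : ∀ x, σ (-x) = -σ x)
    (h₁ : Matrix V de ℂ → Matrix V k₁ ℂ) (h₂ : Matrix V di ℂ → Matrix V k₂ ℂ)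
    (W₁ : Matrix k₁ d' ℂ) (W₂ : Matrix k₂ d' ℂ) (W₃ : Matrix de d' ℂ)
    (X : Matrix E de ℂ) (Y : Matrix E di ℂ) :
    ((Bequ q s t dir Ohat)ᴴ * h₁ (Bequ q s t dir Ohat * (Delta O Ohat * X)) * W₁
      + (Bequ q s t dir Ohat)ᴴ * h₂ (Binv q s t dir * Y) * W₂
      + (Delta O Ohat * X) * W₃).map σ
    = Delta O Ohat *
      (((Bequ q s t dir O)ᴴ * h₁ (Bequ q s t dir O * X) * W₁
        + (Bequ q s t dir O)ᴴ * h₂ (Binv q s t dir * Y) * W₂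
        + X * W₃).map σ) := by
  classical
  set D := Delta O Ohat with hDdef
  have hDsq : D * D = 1 := by
    rw [hDdef, Delta, Matrix.diagonal_mul_diagonal]
    ext i j
    by_cases h : O i = Ohat i <;> simp [Matrix.diagonal, Matrix.one_apply, h] <;>
      by_cases hij : i = j <;> simp [hij]
  have hB : Bequ q s t dir Ohat = Bequ q s t dir O * D := by
    ext v e
    rw [hDdef, Delta, Matrix.mul_diagonal]
    by_cases hd : dir e
    · have : O e = Ohat e := (hO.2 e hd).trans (hOhat.2 e hd).symm
      simp [Bequ, hd, this]
    · by_cases heq : O e = Ohat e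
      · simp [Bequ, hd, heq]
      · have h1 := hO.1 e
        have h2 := hOhat.1 e
        have hne := hst e
        have hne' : t e ≠ s e := fun h => hne h.symm
        rcases h1 with h1 | h1 <;> rcases h2 with h2 | h2 <;>
          first
          | (exact absurd (h1.trans h2.symm) heq)
          | (simp only [Bequ, Matrix.of_apply, if_neg (by simp [hd] : ¬(dir e = true)),
              h1, h2]
             by_cases hv : v = s e <;> by_cases hv2 : v = t e <;>
               simp_all <;> ring)
  have hDH : Dᴴ = D := by
    ext i j
    rw [Matrix.conjTranspose_apply, hDdef, Delta]
    by_cases hij : i = j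
    · subst hij
      by_cases h : O i = Ohat i <;> simp [Matrix.diagonal_apply, h]
    · have hji : ¬ j = i := fun h => hij h.symm
      simp [Matrix.diagonal_apply, hij, hji]
  have hσ0 : σ 0 = 0 := by
    have := hσ 0
    rw [neg_zero] at this
    linear_combination this / 2
  have hmap : ∀ {n : Type _} (M : Matrix E n ℂ), (D * M).map σ = D * M.map σ := by
    intro n M
    ext i j
    rw [Matrix.map_apply, hDdef, Delta, Matrix.diagonal_mul, Matrix.diagonal_mul,
      Matrix.map_apply]
    by_cases h : O i = Ohat i
    · simp [h]
    · simp [h, ← hσ]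
  have hE : Bequ q s t dir Ohat * (D * X) = Bequ q s t dir O * X := by
    rw [hB, Matrix.mul_assoc, ← Matrix.mul_assoc D, hDsq, Matrix.one_mul]
  have hBH : (Bequ q s t dir Ohat)ᴴ = D * (Bequ q s t dir O)ᴴ := by
    rw [hB, Matrix.conjTranspose_mul, hDH]
  rw [hE, hBH]
  simp only [Matrix.mul_assoc]
  rw [← Matrix.mul_add, ← Matrix.mul_add, hmap]
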